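/- Let G be a connected finite simple graph on a vertex set V, and let M ⊆ V be a subset with #M = N. Write t' := (#edges of G) − #V + 1 for the first Betti number of G. Assume that every connected component K of the induced subgraph of G on V ∖ M satisfies #{(x,m) : x ∈ K, m ∈ M, x adjacent to m in G} ≥ 2, i.e., each component of G − M has at least two edges to M. Then the number of connected components of the induced subgraph of G on V ∖ M is at most N − 1 + t'. -/

import Mathlib

set_option linter.unusedVariables false

open SimpleGraph

private lemma walk_delete_aux {W : Type*} {H : SimpleGraph W} (u v : W) {x y : W}
    (p : H.Walk x y) :
    (H.deleteEdges {s(u,v)}).Reachable x y ∨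
      (H.deleteEdges {s(u,v)}).Reachable x u ∨ (H.deleteEdges {s(u,v)}).Reachable x v := by
  induction p with
  | nil => exact Or.inl (Reachable.refl _)
  | @cons a b c h p ih =>
    by_cases hab : s(a, b) = s(u, v)
    · rw [Sym2.eq_iff] at hab
      rcases hab with ⟨ha, -⟩ | ⟨ha, -⟩
      · subst ha; exact Or.inr (Or.inl (Reachable.refl _))
      · subst ha; exact Or.inr (Or.inr (Reachable.refl _))
    · have hadj : (H.deleteEdges {s(u,v)}).Adj a b := by
        rw [SimpleGraph.deleteEdges_adj]
        exact ⟨h, by simpa using hab⟩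
      rcases ih with h1 | h1 | h1
      · exact Or.inl (hadj.reachable.trans h1)
      · exact Or.inr (Or.inl (hadj.reachable.trans h1))
      · exact Or.inr (Or.inr (hadj.reachable.trans h1))

private lemma cc_delete_le {W : Type*} [Finite W] (H : SimpleGraph W) (u v : W) :
    Nat.card (H.deleteEdges {s(u,v)}).ConnectedComponent
      ≤ Nat.card H.ConnectedComponent + 1 := by
  classical
  set H' := H.deleteEdges {s(u,v)} with hH'
  have hle : H' ≤ H := SimpleGraph.deleteEdges_le _
  let φ : H'.ConnectedComponent → H.ConnectedComponent :=
    SimpleGraph.ConnectedComponent.map (SimpleGraph.Hom.ofLE hle)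
  let ψ : H'.ConnectedComponent → H.ConnectedComponent ⊕ Unit :=
    fun k => if k = H'.connectedComponentMk v then Sum.inr () else Sum.inl (φ k)
  have hinj : Function.Injective ψ := by
    intro k1 k2 hk
    by_cases h1 : k1 = H'.connectedComponentMk v
    · by_cases h2 : k2 = H'.connectedComponentMk v
      · rw [h1, h2]
      · simp [ψ, h1, h2] at hk
    · by_cases h2 : k2 = H'.connectedComponentMk v
      · simp [ψ, h1, h2] at hk
      · simp only [ψ, if_neg h1, if_neg h2, Sum.inl.injEq] at hk
        revert h1 h2 hk
        refine SimpleGraph.ConnectedComponent.ind₂ (fun x y => ?_) k1 k2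
        intro h1 h2 hk
        have hxy : H.Reachable x y := by
          simp only [φ, SimpleGraph.ConnectedComponent.map_mk] at hk
          exact SimpleGraph.ConnectedComponent.exact hk
        obtain ⟨p⟩ := hxy
        have hx := walk_delete_aux u v p
        have hy := walk_delete_aux u v p.reverse
        have hxv : ¬ H'.Reachable x v := fun h => h1 (SimpleGraph.ConnectedComponent.sound h)
        have hyv : ¬ H'.Reachable y v := fun h => h2 (SimpleGraph.ConnectedComponent.sound h)
        rcases hx with h | h | h
        · exact SimpleGraph.ConnectedComponent.sound h
        · rcases hy with h' | h' | h'
          · exact SimpleGraph.ConnectedComponent.sound h'.symm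
          · exact SimpleGraph.ConnectedComponent.sound (h.trans h'.symm)
          · exact absurd h' hyv
        · exact absurd h hxv
  have := Nat.card_le_card_of_injective ψ hinj
  simpa [Nat.card_sum] using this

private lemma card_le_aux : ∀ (n : ℕ) {W : Type*} [Finite W] (H : SimpleGraph W),
    Nat.card H.edgeSet = n → Nat.card W ≤ n + Nat.card H.ConnectedComponent := by
  intro n
  induction n using Nat.strong_induction_on with
  | _ n ih =>
    intro W _ H hn
    classical
    by_cases he : H.edgeSet = ∅
    · have hbot : H = ⊥ := SimpleGraph.edgeSet_eq_empty.mp he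
      subst hbot
      have hbij : Function.Bijective ((⊥ : SimpleGraph W).connectedComponentMk) := by
        constructor
        · intro a b hab
          exact SimpleGraph.reachable_bot.mp (SimpleGraph.ConnectedComponent.exact hab)
        · exact fun c => c.exists_rep
      have hcc : Nat.card (⊥ : SimpleGraph W).ConnectedComponent = Nat.card W :=
        (Nat.card_eq_of_bijective _ hbij).symm
      omega
    · obtain ⟨u, v, huv⟩ := Sym2.exists.mp (Set.nonempty_iff_ne_empty.mpr he)
      have hcard' : Nat.card (H.deleteEdges {s(u,v)}).edgeSet = n - 1 := by
        rw [SimpleGraph.edgeSet_deleteEdges]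
        rw [Nat.card_coe_set_eq] at hn ⊢
        rw [Set.ncard_diff_singleton_of_mem huv, hn]
      have hn1 : 1 ≤ n := by
        rw [← hn, Nat.card_coe_set_eq]
        exact (Set.ncard_pos (Set.toFinite _)).mpr ⟨_, huv⟩
      have h1 := ih (n - 1) (by omega) (H.deleteEdges {s(u,v)}) hcard'
      have h2 := cc_delete_le H u v
      omega

theorem chains_bound {V : Type*} [Fintype V] [DecidableEq V]
    (G : SimpleGraph V) [DecidableRel G.Adj] (hconn : G.Connected)
    (M : Finset V) (N : ℕ) (hN : M.card = N)
    (hK : ∀ c : (G.induce ((↑M : Set V)ᶜ)).ConnectedComponent,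
      2 ≤ Nat.card {q : ((↑M : Set V)ᶜ : Set V) × V //
            q.2 ∈ M ∧ G.Adj (↑q.1) q.2 ∧
              (G.induce ((↑M : Set V)ᶜ)).connectedComponentMk q.1 = c}) :
    (Nat.card (G.induce ((↑M : Set V)ᶜ)).ConnectedComponent : ℤ)
      ≤ (N : ℤ) - 1 + ((G.edgeFinset.card : ℤ) - (Fintype.card V : ℤ) + 1) := by
  classical
  set S : Set V := (↑M : Set V)ᶜ with hS
  set H : SimpleGraph S := G.induce S with hH
  let T := {q : S × V // q.2 ∈ M ∧ G.Adj (↑q.1) q.2}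
  have hnot : ∀ a : S, (↑a : V) ∉ M := fun a ha => a.2 (Finset.mem_coe.mpr ha)
  -- (1) vertex count
  have h1 : Nat.card S + N = Fintype.card V := by
    have := Set.ncard_add_ncard_compl (↑M : Set V)
    rw [Set.ncard_coe_finset, Nat.card_eq_fintype_card, hN] at this
    rw [Nat.card_coe_set_eq, hS]
    omega
  -- (2) components vs internal edges
  have h2 : Nat.card S ≤ Nat.card H.edgeSet + Nat.card H.ConnectedComponent :=
    card_le_aux (Nat.card H.edgeSet) H rfl
  -- (3) cross pairs count
  have h3 : 2 * Nat.card H.ConnectedComponent ≤ Nat.card T := by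
    haveI : Fintype H.ConnectedComponent := Fintype.ofFinite _
    haveI : Fintype T := Fintype.ofFinite _
    let f : T → H.ConnectedComponent := fun t => H.connectedComponentMk t.1.1
    have hfib : ∀ c, 2 ≤ Nat.card {t : T // f t = c} := by
      intro c
      have he : {t : T // f t = c} ≃ {q : S × V //
          q.2 ∈ M ∧ G.Adj (↑q.1) q.2 ∧ H.connectedComponentMk q.1 = c} :=
        { toFun := fun t => ⟨t.1.1, t.1.2.1, t.1.2.2, t.2⟩
          invFun := fun q => ⟨⟨q.1, q.2.1, q.2.2.1⟩, q.2.2.2⟩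
          left_inv := fun t => rfl
          right_inv := fun q => rfl }
      rw [Nat.card_congr he]
      exact hK c
    have hsig := Nat.card_congr (Equiv.sigmaFiberEquiv f)
    rw [Nat.card_eq_fintype_card, Nat.card_eq_fintype_card, Fintype.card_sigma] at hsig
    rw [show Nat.card T = Fintype.card T from Nat.card_eq_fintype_card,
      show Nat.card H.ConnectedComponent = Fintype.card H.ConnectedComponent from
        Nat.card_eq_fintype_card, ← hsig]
    calc 2 * Fintype.card H.ConnectedComponent
        = ∑ _c : H.ConnectedComponent, 2 := by
          rw [Finset.sum_const, Finset.card_univ]; ring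
      _ ≤ ∑ c : H.ConnectedComponent, Fintype.card {t : T // f t = c} := by
          refine Finset.sum_le_sum fun c _ => ?_
          rw [← Nat.card_eq_fintype_card]; exact hfib c
  -- (4) edge injection
  have h4 : Nat.card H.edgeSet + Nat.card T ≤ Nat.card G.edgeSet := by
    have hmem1 : ∀ e ∈ H.edgeSet, e.map (Subtype.val : S → V) ∈ G.edgeSet := by
      intro e
      induction e using Sym2.ind with
      | _ a b => intro he; exact he
    let g : H.edgeSet ⊕ T → G.edgeSet :=
      Sum.elim (fun e => ⟨e.1.map Subtype.val, hmem1 e.1 e.2⟩)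
        (fun t => ⟨s((↑t.1.1 : V), t.1.2), t.2.2⟩)
    have hcross : ∀ (e : H.edgeSet) (t : T),
        (e.1.map Subtype.val : Sym2 V) ≠ s((↑t.1.1 : V), t.1.2) := by
      intro e t heq
      have hm : (t.1.2 : V) ∈ (e.1.map (Subtype.val : S → V)) := by
        rw [heq]; simp
      obtain ⟨a, -, ha⟩ := Sym2.mem_map.mp hm
      exact hnot a (ha ▸ t.2.1)
    have hginj : Function.Injective g := by
      rintro (e1 | t1) (e2 | t2) hg
      · simp only [g, Sum.elim_inl, Subtype.mk.injEq] at hg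
        have := Sym2.map.injective Subtype.val_injective hg
        exact congrArg Sum.inl (Subtype.ext this)
      · exact absurd (congrArg Subtype.val hg) (hcross e1 t2)
      · exact absurd (congrArg Subtype.val hg).symm (hcross e2 t1)
      · simp only [g, Sum.elim_inr, Subtype.mk.injEq, Sym2.eq_iff] at hg
        rcases Sym2.eq_iff.mp (congrArg Subtype.val hg) with ⟨ha, hb⟩ | ⟨ha, hb⟩
        · exact congrArg Sum.inr (Subtype.ext (Prod.ext (Subtype.ext ha) hb))
        · exact absurd (ha ▸ t2.2.1) (hnot t1.1.1)
    have := Nat.card_le_card_of_injective g hginj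
    simpa [Nat.card_sum] using this
  -- arithmetic
  have h5 : Nat.card G.edgeSet = G.edgeFinset.card := by
    rw [SimpleGraph.edgeFinset_card, Nat.card_eq_fintype_card]
  omega
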